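/- Let X, Y be real Hilbert spaces, φ : X → (−∞,+∞] proper, closed, convex, A ∈ L(X,Y), r > 0, z ∈ X, x₀ ∈ X, b ∈ Y. Define d(θ) := (1/(2r))‖p̄(θ)−z‖² + φ(p̄(θ)) + ⟨θ, A(p̄(θ)−x₀)+b⟩ where p̄(θ) := prox_{rφ}(z − r A*θ). Then d is concave and Fréchet differentiable on Y with ∇d(θ) = A(p̄(θ) − x₀) + b, and ∇d is Lipschitz continuous with modulus r‖A‖²_{L(X,Y)}. -/

import Mathlib

noncomputable section

/-- A function into the extended reals is proper if it never takes the value `-∞`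
and is not identically `+∞`. -/
def ProperFn {X : Type*} (ψ : X → EReal) : Prop :=
  (∀ x, ψ x ≠ ⊥) ∧ ∃ x, ψ x ≠ ⊤

/-- Convexity for extended-real-valued functions. -/
def ConvexFnE {X : Type*} [AddCommMonoid X] [Module ℝ X] (ψ : X → EReal) : Prop :=
  ∀ x y : X, ∀ a b : ℝ, 0 ≤ a → 0 ≤ b → a + b = 1 →
    ψ (a • x + b • y) ≤ (a : EReal) * ψ x + (b : EReal) * ψ y

/-- The objective function defining the proximity operator `prox_{tψ}(z)`. -/
def proxObj {X : Type*} [NormedAddCommGroup X] (ψ : X → EReal) (t : ℝ) (z x : X) : EReal :=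
  (((1 / (2 * t)) * ‖x - z‖ ^ 2 : ℝ) : EReal) + ψ x

/-- `p` is the proximal point `prox_{tψ}(z)`, i.e. a (the) global minimizer of the
prox objective. -/
def IsProx {X : Type*} [NormedAddCommGroup X] (ψ : X → EReal) (t : ℝ) (z p : X) : Prop :=
  ∀ x, proxObj ψ t z p ≤ proxObj ψ t z x

/-- The convex subdifferential of an extended-real-valued function. -/
def subdiffE {X : Type*} [NormedAddCommGroup X] [InnerProductSpace ℝ X]
    (ψ : X → EReal) (x : X) : Set X :=
  {v | ∀ y, ψ x + ((inner ℝ v (y - x) : ℝ) : EReal) ≤ ψ y}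

-- finiteness of φ at the prox point
lemma prox_finite {X : Type*} [NormedAddCommGroup X]
    (φ : X → EReal) (hproper : ProperFn φ) {r : ℝ} {w p : X}
    (hp : IsProx φ r w p) : φ p ≠ ⊥ ∧ φ p ≠ ⊤ := by
  refine ⟨hproper.1 p, ?_⟩
  obtain ⟨x, hx⟩ := hproper.2
  have h := hp x
  intro htop
  simp only [proxObj, htop] at h
  rw [EReal.add_top_of_ne_bot (by exact EReal.coe_ne_bot _)] at h
  have : (((1 / (2 * r)) * ‖x - w‖ ^ 2 : ℝ) : EReal) + φ x < ⊤ :=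
    EReal.add_lt_top (EReal.coe_ne_top _) hx
  exact absurd (top_le_iff.mp h) this.ne

-- convert EReal prox inequality to real
lemma ereal_add_le {a c : ℝ} {u v : EReal} (hu1 : u ≠ ⊥) (hu2 : u ≠ ⊤)
    (hv1 : v ≠ ⊥) (hv2 : v ≠ ⊤)
    (h : (a : EReal) + u ≤ (c : EReal) + v) : a + u.toReal ≤ c + v.toReal := by
  lift u to ℝ using ⟨hu2, hu1⟩
  lift v to ℝ using ⟨hv2, hv1⟩
  rw [← EReal.coe_add, ← EReal.coe_add, EReal.coe_le_coe_iff] at h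
  simpa using h

lemma norm_combo {X : Type*} [NormedAddCommGroup X] [InnerProductSpace ℝ X]
    (u v : X) (a b : ℝ) (hab : a + b = 1) :
    ‖a • u + b • v‖ ^ 2 = a * ‖u‖ ^ 2 + b * ‖v‖ ^ 2 - a * b * ‖u - v‖ ^ 2 := by
  have hb : b = 1 - a := by linarith
  subst hb
  have e : ∀ w : X, ‖w‖ ^ 2 = (inner ℝ w w : ℝ) := fun w => by
    rw [real_inner_self_eq_norm_sq]
  rw [e, e, e, e]
  simp only [inner_add_add_self, inner_sub_sub_self, real_inner_smul_left,
    real_inner_smul_right]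
  ring

lemma strong_prox {X : Type*} [NormedAddCommGroup X] [InnerProductSpace ℝ X]
    (φ : X → EReal) (hproper : ProperFn φ) (hconv : ConvexFnE φ)
    {r : ℝ} (hr : 0 < r) {w p : X} (hp : IsProx φ r w p) (x : X) (hx : φ x ≠ ⊤) :
    1/(2*r) * ‖p - w‖^2 + (φ p).toReal + 1/(2*r) * ‖x - p‖^2
      ≤ 1/(2*r) * ‖x - w‖^2 + (φ x).toReal := by
  obtain ⟨hpb, hpt⟩ := prox_finite φ hproper hp
  have h2r : (0:ℝ) < 1/(2*r) := by positivity
  have key : ∀ t : ℝ, 0 < t → t < 1 →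
      1/(2*r) * ‖p - w‖^2 + (φ p).toReal + (1-t) * (1/(2*r) * ‖x - p‖^2)
        ≤ 1/(2*r) * ‖x - w‖^2 + (φ x).toReal := by
    intro t ht0 ht1
    set q := (1-t) • p + t • x with hq
    have hconvq := hconv p x (1-t) t (by linarith) ht0.le (by ring)
    have hφp : φ p = ((φ p).toReal : EReal) := (EReal.coe_toReal hpt hpb).symm
    have hφx : φ x = ((φ x).toReal : EReal) := (EReal.coe_toReal hx (hproper.1 x)).symm
    have hrhs : ((1-t : ℝ) : EReal) * φ p + (t : EReal) * φ x
        = (((1-t) * (φ p).toReal + t * (φ x).toReal : ℝ) : EReal) := by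
      rw [hφp, hφx, ← EReal.coe_mul, ← EReal.coe_mul, ← EReal.coe_add]
      simp
    have hφq_le : φ q ≤ (((1-t) * (φ p).toReal + t * (φ x).toReal : ℝ) : EReal) := by
      rw [← hrhs]; exact hconvq
    have hφqt : φ q ≠ ⊤ := by
      intro h; rw [h] at hφq_le
      exact absurd (top_le_iff.mp hφq_le) (EReal.coe_ne_top _)
    have hφqb : φ q ≠ ⊥ := hproper.1 q
    have hφq_real : (φ q).toReal ≤ (1-t) * (φ p).toReal + t * (φ x).toReal := by
      have := EReal.toReal_le_toReal hφq_le hφqb (EReal.coe_ne_top _)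
      rw [EReal.toReal_coe] at this; exact this
    have hpq := hp q
    simp only [proxObj] at hpq
    have hreal : 1/(2*r) * ‖p - w‖^2 + (φ p).toReal
        ≤ 1/(2*r) * ‖q - w‖^2 + (φ q).toReal :=
      ereal_add_le hpb hpt hφqb hφqt hpq
    have hnq : q - w = (1-t) • (p - w) + t • (x - w) := by
      rw [hq, smul_sub, smul_sub]; rw [sub_smul, sub_smul]; abel_nf; module
    have hni : ‖q - w‖^2 = (1-t) * ‖p-w‖^2 + t * ‖x-w‖^2 - (1-t)*t*‖(p-w)-(x-w)‖^2 := by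
      rw [hnq]; exact norm_combo _ _ _ _ (by ring)
    have hpx : (p - w) - (x - w) = p - x := by abel
    rw [hni, hpx] at hreal
    have hnr : ‖x - p‖ = ‖p - x‖ := norm_sub_rev x p
    rw [hnr]
    have h3 : t * (1/(2*r) * ‖p - w‖^2 + (φ p).toReal + (1-t) * (1/(2*r) * ‖p - x‖^2))
        ≤ t * (1/(2*r) * ‖x - w‖^2 + (φ x).toReal) := by nlinarith [hreal, hφq_real]
    exact le_of_mul_le_mul_left h3 ht0
  by_contra hcon
  push_neg at hcon
  obtain ⟨c, hc⟩ : ∃ c, c = 1/(2*r) * ‖x - p‖^2 := ⟨_, rfl⟩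
  obtain ⟨B, hB⟩ : ∃ B, B = 1/(2*r) * ‖x - w‖^2 + (φ x).toReal
      - (1/(2*r) * ‖p - w‖^2 + (φ p).toReal) := ⟨_, rfl⟩
  have hkey' : ∀ t : ℝ, 0 < t → t < 1 → (1-t)*c ≤ B := fun t h1 h2 => by
    rw [hc, hB]; linarith [key t h1 h2]
  have hBc : B < c := by rw [hc, hB]; linarith
  have hhalf := hkey' (1/2) (by norm_num) (by norm_num)
  have hc0 : 0 < c := by linarith
  set t0 := (c - B)/(2*c) with ht0def
  have ht0pos : 0 < t0 := div_pos (by linarith) (by linarith)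
  have ht0lt : t0 < 1 := by rw [ht0def, div_lt_one (by linarith)]; linarith
  have hfin := hkey' t0 ht0pos ht0lt
  have ht0c : t0 * c = (c - B)/2 := by rw [ht0def]; field_simp
  linarith

open RealInnerProductSpace

lemma four_norm {X : Type*} [NormedAddCommGroup X] [InnerProductSpace ℝ X]
    (p₁ p₂ w₁ w₂ : X) :
    ‖p₂ - w₁‖^2 + ‖p₁ - w₂‖^2 - ‖p₁ - w₁‖^2 - ‖p₂ - w₂‖^2 = 2 * ⟪p₁ - p₂, w₁ - w₂⟫ := by
  simp only [norm_sub_sq_real, inner_sub_left, inner_sub_right]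
  ring

set_option maxHeartbeats 1000000 in
theorem stmt_12 {X Y : Type*} [NormedAddCommGroup X] [InnerProductSpace ℝ X] [CompleteSpace X]
    [NormedAddCommGroup Y] [InnerProductSpace ℝ Y] [CompleteSpace Y]
    (φ : X → EReal) (hproper : ProperFn φ) (hconv : ConvexFnE φ)
    (hlsc : LowerSemicontinuous φ)
    (A : X →L[ℝ] Y) (r : ℝ) (hr : 0 < r) (z x₀ : X) (b : Y)
    -- `pbar θ` is the proximal point `prox_{rφ}(z - r A* θ)`
    (pbar : Y → X)
    (hpbar : ∀ θ : Y, IsProx φ r (z - r • (ContinuousLinearMap.adjoint A) θ) (pbar θ))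
    -- the dual objective
    (d : Y → ℝ)
    (hd : ∀ θ : Y, d θ =
      (1 / (2 * r)) * ‖pbar θ - z‖ ^ 2 + (φ (pbar θ)).toReal
        + (inner ℝ θ (A (pbar θ - x₀) + b) : ℝ)) :
    ConcaveOn ℝ Set.univ d ∧
    (∀ θ : Y, HasGradientAt d (A (pbar θ - x₀) + b) θ) ∧
    (∀ θ₁ θ₂ : Y, ‖(A (pbar θ₁ - x₀) + b) - (A (pbar θ₂ - x₀) + b)‖ ≤ r * ‖A‖ ^ 2 * ‖θ₁ - θ₂‖) := by
  have hfin : ∀ θ : Y, φ (pbar θ) ≠ ⊥ ∧ φ (pbar θ) ≠ ⊤ :=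
    fun θ => prox_finite φ hproper (hpbar θ)
  -- quadratic expansion of the shifted norm
  have hid : ∀ (θ : Y) (x : X),
      1/(2*r) * ‖x - (z - r • (ContinuousLinearMap.adjoint A) θ)‖^2
        = 1/(2*r) * ‖x - z‖^2 + ⟪θ, A (x - z)⟫
          + r/2 * ‖(ContinuousLinearMap.adjoint A) θ‖^2 := by
    intro θ x
    have h1 : x - (z - r • (ContinuousLinearMap.adjoint A) θ)
        = (x - z) + r • (ContinuousLinearMap.adjoint A) θ := by abel
    have h2 : ⟪x - z, (ContinuousLinearMap.adjoint A) θ⟫ = ⟪θ, A (x - z)⟫ := by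
      rw [ContinuousLinearMap.adjoint_inner_right]
      exact real_inner_comm _ _
    rw [h1, norm_add_sq_real, real_inner_smul_right, h2, norm_smul, Real.norm_eq_abs,
      abs_of_pos hr]
    field_simp
  -- decomposition of the pairing term
  have hip : ∀ (θ : Y) (x : X),
      ⟪θ, A (x - x₀) + b⟫ = ⟪θ, A (x - z)⟫ + ⟪θ, A (z - x₀) + b⟫ := by
    intro θ x
    have h1 : A (x - x₀) + b = A (x - z) + (A (z - x₀) + b) := by
      rw [map_sub, map_sub, map_sub]; abel
    rw [h1, inner_add_right]
  -- Lipschitz estimate on pbar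
  have lipP : ∀ θ₁ θ₂ : Y, ‖pbar θ₁ - pbar θ₂‖ ≤ r * ‖A‖ * ‖θ₁ - θ₂‖ := by
    intro θ₁ θ₂
    have h12 := strong_prox φ hproper hconv hr (hpbar θ₁) (pbar θ₂) (hfin θ₂).2
    have h21 := strong_prox φ hproper hconv hr (hpbar θ₂) (pbar θ₁) (hfin θ₁).2
    obtain ⟨w₁, hw₁⟩ : ∃ w, w = z - r • (ContinuousLinearMap.adjoint A) θ₁ := ⟨_, rfl⟩
    obtain ⟨w₂, hw₂⟩ : ∃ w, w = z - r • (ContinuousLinearMap.adjoint A) θ₂ := ⟨_, rfl⟩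
    rw [← hw₁] at h12
    rw [← hw₂] at h21
    have hfn := four_norm (pbar θ₁) (pbar θ₂) w₁ w₂
    have hWdiff : w₁ - w₂ = r • ((ContinuousLinearMap.adjoint A) (θ₂ - θ₁)) := by
      rw [hw₁, hw₂, map_sub]; module
    have hprod : ⟪pbar θ₁ - pbar θ₂, w₁ - w₂⟫
        = r * ⟪A (pbar θ₁ - pbar θ₂), θ₂ - θ₁⟫ := by
      rw [hWdiff, real_inner_smul_right, ContinuousLinearMap.adjoint_inner_right]
    have hcs : ⟪A (pbar θ₁ - pbar θ₂), θ₂ - θ₁⟫ ≤ ‖A (pbar θ₁ - pbar θ₂)‖ * ‖θ₂ - θ₁‖ :=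
      real_inner_le_norm _ _
    have hop : ‖A (pbar θ₁ - pbar θ₂)‖ ≤ ‖A‖ * ‖pbar θ₁ - pbar θ₂‖ := A.le_opNorm _
    have hnr1 : ‖pbar θ₂ - pbar θ₁‖ = ‖pbar θ₁ - pbar θ₂‖ := norm_sub_rev _ _
    have hnr2 : ‖θ₂ - θ₁‖ = ‖θ₁ - θ₂‖ := norm_sub_rev _ _
    -- firm nonexpansiveness: ‖p₁-p₂‖² ≤ ⟪p₁-p₂, w₁-w₂⟫
    rw [hnr1] at h12
    have hfirm : ‖pbar θ₁ - pbar θ₂‖^2 ≤ ⟪pbar θ₁ - pbar θ₂, w₁ - w₂⟫ := by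
      have h2r : (0:ℝ) < 1/(2*r) := by positivity
      have hfn' : 1/(2*r) * (‖pbar θ₂ - w₁‖^2 + ‖pbar θ₁ - w₂‖^2 - ‖pbar θ₁ - w₁‖^2
          - ‖pbar θ₂ - w₂‖^2) = 1/(2*r) * (2 * ⟪pbar θ₁ - pbar θ₂, w₁ - w₂⟫) := by
        rw [hfn]
      have hstep : 1/(2*r) * (2*‖pbar θ₁ - pbar θ₂‖^2)
          ≤ 1/(2*r) * (2*⟪pbar θ₁ - pbar θ₂, w₁ - w₂⟫) := by
        linarith [h12, h21, hfn']
      have := (mul_le_mul_iff_right₀ h2r).mp hstep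
      linarith
    have hsq : ‖pbar θ₁ - pbar θ₂‖^2 ≤ r * ‖A‖ * ‖θ₁ - θ₂‖ * ‖pbar θ₁ - pbar θ₂‖ := by
      rw [hprod] at hfirm
      have s1 : r * ⟪A (pbar θ₁ - pbar θ₂), θ₂ - θ₁⟫
          ≤ r * (‖A (pbar θ₁ - pbar θ₂)‖ * ‖θ₂ - θ₁‖) := mul_le_mul_of_nonneg_left hcs hr.le
      have s2 : ‖A (pbar θ₁ - pbar θ₂)‖ * ‖θ₂ - θ₁‖
          ≤ (‖A‖ * ‖pbar θ₁ - pbar θ₂‖) * ‖θ₂ - θ₁‖ :=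
        mul_le_mul_of_nonneg_right hop (norm_nonneg _)
      rw [hnr2] at s1 s2
      have s3 := mul_le_mul_of_nonneg_left s2 hr.le
      linarith [hfirm, s1, s3]
    by_cases h0 : ‖pbar θ₁ - pbar θ₂‖ = 0
    · rw [h0]; positivity
    · have hpos : 0 < ‖pbar θ₁ - pbar θ₂‖ := lt_of_le_of_ne (norm_nonneg _) (Ne.symm h0)
      nlinarith [hsq]
  -- Lipschitz estimate on the gradient candidate
  have lipG : ∀ θ₁ θ₂ : Y, ‖(A (pbar θ₁ - x₀) + b) - (A (pbar θ₂ - x₀) + b)‖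
      ≤ r * ‖A‖ ^ 2 * ‖θ₁ - θ₂‖ := by
    intro θ₁ θ₂
    have h1 : (A (pbar θ₁ - x₀) + b) - (A (pbar θ₂ - x₀) + b) = A (pbar θ₁ - pbar θ₂) := by
      rw [map_sub, map_sub, map_sub]; abel
    rw [h1]
    have hop : ‖A (pbar θ₁ - pbar θ₂)‖ ≤ ‖A‖ * ‖pbar θ₁ - pbar θ₂‖ := A.le_opNorm _
    have := lipP θ₁ θ₂
    nlinarith [norm_nonneg A, norm_nonneg (pbar θ₁ - pbar θ₂)]
  -- the supergradient inequality
  have key : ∀ θ₁ θ₂ : Y, d θ₂ ≤ d θ₁ + ⟪A (pbar θ₁ - x₀) + b, θ₂ - θ₁⟫ := by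
    intro θ₁ θ₂
    have hsp := strong_prox φ hproper hconv hr (hpbar θ₂) (pbar θ₁) (hfin θ₁).2
    have hnn : (0:ℝ) ≤ 1/(2*r) * ‖pbar θ₁ - pbar θ₂‖^2 := by positivity
    have e2 := hid θ₂ (pbar θ₂)
    have e1 := hid θ₂ (pbar θ₁)
    have i2 := hip θ₂ (pbar θ₂)
    have i1 := hip θ₂ (pbar θ₁)
    have i4 : ⟪A (pbar θ₁ - x₀) + b, θ₂ - θ₁⟫
        = ⟪θ₂, A (pbar θ₁ - x₀) + b⟫ - ⟪θ₁, A (pbar θ₁ - x₀) + b⟫ := by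
      rw [inner_sub_right, real_inner_comm (A (pbar θ₁ - x₀) + b) θ₂,
        real_inner_comm (A (pbar θ₁ - x₀) + b) θ₁]
    rw [hd θ₁, hd θ₂]
    linarith [hsp, e1, e2, i1, i2, i4, hnn]
  refine ⟨⟨convex_univ, ?_⟩, ?_, lipG⟩
  · -- concavity
    intro θ₁ _ θ₂ _ a c ha hc hac
    simp only [smul_eq_mul]
    set θ := a • θ₁ + c • θ₂ with hθ
    have k1 : a * d θ₁ ≤ a * (d θ + ⟪A (pbar θ - x₀) + b, θ₁ - θ⟫) :=
      mul_le_mul_of_nonneg_left (key θ θ₁) ha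
    have k2 : c * d θ₂ ≤ c * (d θ + ⟪A (pbar θ - x₀) + b, θ₂ - θ⟫) :=
      mul_le_mul_of_nonneg_left (key θ θ₂) hc
    have hz : a • (θ₁ - θ) + c • (θ₂ - θ) = (0:Y) := by
      have h1 : a • (θ₁ - (a • θ₁ + c • θ₂)) + c • (θ₂ - (a • θ₁ + c • θ₂))
          = (1 - (a + c)) • (a • θ₁ + c • θ₂) := by module
      rw [hθ, h1, hac]; simp
    have e1 : ⟪A (pbar θ - x₀) + b, a • (θ₁ - θ) + c • (θ₂ - θ)⟫
        = a * ⟪A (pbar θ - x₀) + b, θ₁ - θ⟫ + c * ⟪A (pbar θ - x₀) + b, θ₂ - θ⟫ := by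
      rw [inner_add_right, real_inner_smul_right, real_inner_smul_right]
    have hzero : a * ⟪A (pbar θ - x₀) + b, θ₁ - θ⟫
        + c * ⟪A (pbar θ - x₀) + b, θ₂ - θ⟫ = 0 := by
      rw [← e1, hz, inner_zero_right]
    have hsum : a * (d θ + ⟪A (pbar θ - x₀) + b, θ₁ - θ⟫)
        + c * (d θ + ⟪A (pbar θ - x₀) + b, θ₂ - θ⟫)
        = d θ + (a * ⟪A (pbar θ - x₀) + b, θ₁ - θ⟫
          + c * ⟪A (pbar θ - x₀) + b, θ₂ - θ⟫) := by
      linear_combination d θ * hac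
    linarith [k1, k2]
  · -- differentiability
    intro θ
    rw [hasGradientAt_iff_isLittleO, Asymptotics.isLittleO_iff]
    intro ε hε
    have hC0 : (0:ℝ) ≤ r * ‖A‖ ^ 2 := by positivity
    have hδ : (0:ℝ) < ε / (r * ‖A‖ ^ 2 + 1) := by positivity
    filter_upwards [Metric.ball_mem_nhds θ hδ] with y hy
    rw [Metric.mem_ball, dist_eq_norm] at hy
    have hub := key θ y
    have hlb0 := key y θ
    -- lower bound manipulation
    have hflip : ⟪A (pbar y - x₀) + b, θ - y⟫ = - ⟪A (pbar y - x₀) + b, y - θ⟫ := by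
      rw [← inner_neg_right]; congr 1; abel
    have hsub : ⟪A (pbar y - x₀) + b, y - θ⟫ - ⟪A (pbar θ - x₀) + b, y - θ⟫
        = ⟪(A (pbar y - x₀) + b) - (A (pbar θ - x₀) + b), y - θ⟫ := by
      rw [inner_sub_left]
    have hcs : |⟪(A (pbar y - x₀) + b) - (A (pbar θ - x₀) + b), y - θ⟫|
        ≤ ‖(A (pbar y - x₀) + b) - (A (pbar θ - x₀) + b)‖ * ‖y - θ‖ :=
      abs_real_inner_le_norm _ _
    have hlip := lipG y θ
    have hbound : |d y - d θ - ⟪A (pbar θ - x₀) + b, y - θ⟫|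
        ≤ (r * ‖A‖ ^ 2) * (‖y - θ‖ * ‖y - θ‖) := by
      rw [abs_le]
      constructor
      · have h1 : d y - d θ - ⟪A (pbar θ - x₀) + b, y - θ⟫
            ≥ ⟪(A (pbar y - x₀) + b) - (A (pbar θ - x₀) + b), y - θ⟫ := by
          rw [← hsub]; linarith [hlb0, hflip]
        have h2 : -(‖(A (pbar y - x₀) + b) - (A (pbar θ - x₀) + b)‖ * ‖y - θ‖)
            ≤ ⟪(A (pbar y - x₀) + b) - (A (pbar θ - x₀) + b), y - θ⟫ := by
          have := abs_le.mp hcs; linarith [this.1]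
        have h3 : ‖(A (pbar y - x₀) + b) - (A (pbar θ - x₀) + b)‖ * ‖y - θ‖
            ≤ (r * ‖A‖ ^ 2 * ‖y - θ‖) * ‖y - θ‖ :=
          mul_le_mul_of_nonneg_right hlip (norm_nonneg _)
        nlinarith [norm_sub_rev y θ]
      · nlinarith [hub, mul_nonneg (mul_nonneg hC0 (norm_nonneg (y - θ))) (norm_nonneg (y - θ))]
    rw [Real.norm_eq_abs]
    have hsmall : (r * ‖A‖ ^ 2) * ‖y - θ‖ ≤ ε := by
      have h1 : ‖y - θ‖ ≤ ε / (r * ‖A‖ ^ 2 + 1) := hy.le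
      have hq := mul_le_mul_of_nonneg_left h1 hC0
      have hCI : r * ‖A‖ ^ 2 / (r * ‖A‖ ^ 2 + 1) ≤ 1 := by
        rw [div_le_one (by positivity)]; linarith
      calc (r * ‖A‖ ^ 2) * ‖y - θ‖ ≤ r * ‖A‖ ^ 2 * (ε / (r * ‖A‖ ^ 2 + 1)) := hq
        _ = (r * ‖A‖ ^ 2 / (r * ‖A‖ ^ 2 + 1)) * ε := by ring
        _ ≤ 1 * ε := mul_le_mul_of_nonneg_right hCI hε.le
        _ = ε := one_mul ε
    calc |d y - d θ - ⟪A (pbar θ - x₀) + b, y - θ⟫|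
        ≤ (r * ‖A‖ ^ 2) * (‖y - θ‖ * ‖y - θ‖) := hbound
      _ = ((r * ‖A‖ ^ 2) * ‖y - θ‖) * ‖y - θ‖ := by ring
      _ ≤ ε * ‖y - θ‖ := mul_le_mul_of_nonneg_right hsmall (norm_nonneg _)
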